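/- Let f(x) = e^x/(1+e^x) and let c_1 < ... < c_{K-1} be real cut-points. For 1 ≤ k-1 < k < K, if v is a real number satisfying c_{k-1} - ln(1 - e^{-(c_k - c_{k-1})}) < v ≤ c_k - ln(1 - e^{-(c_{k+1} - c_k)}), then P(k) ≥ P(k+1) and P(k) > P(k-1), where P(j) = ∏_{q<j}(1 - f(c_q - v))·f(c_j - v) for j < K. -/

import Mathlib

noncomputable def sigmoid (x : ℝ) : ℝ := Real.exp x / (1 + Real.exp x)

lemma sigmoid_lt_one (x : ℝ) : sigmoid x < 1 := by
  unfold sigmoid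
  have h := Real.exp_pos x
  rw [div_lt_one (by linarith)]
  linarith

lemma key_ge (a b : ℝ) (h : Real.exp b ≤ Real.exp a + Real.exp a * Real.exp b) :
    (1 - sigmoid a) * sigmoid b ≤ sigmoid a := by
  unfold sigmoid
  have ha := Real.exp_pos a
  have hb := Real.exp_pos b
  have ha1 : (0:ℝ) < 1 + Real.exp a := by linarith
  have hb1 : (0:ℝ) < 1 + Real.exp b := by linarith
  have heq : (1:ℝ) - Real.exp a / (1 + Real.exp a) = 1 / (1 + Real.exp a) := by
    field_simp
    ring
  rw [heq, div_mul_div_comm, one_mul, div_le_div_iff₀ (by positivity) ha1]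
  nlinarith [h, ha, hb]

lemma key_gt (a b : ℝ) (h : Real.exp a + Real.exp a * Real.exp b < Real.exp b) :
    sigmoid a < (1 - sigmoid a) * sigmoid b := by
  unfold sigmoid
  have ha := Real.exp_pos a
  have hb := Real.exp_pos b
  have ha1 : (0:ℝ) < 1 + Real.exp a := by linarith
  have hb1 : (0:ℝ) < 1 + Real.exp b := by linarith
  have key : Real.exp a / (1 + Real.exp a) <
      (1 / (1 + Real.exp a)) * (Real.exp b / (1 + Real.exp b)) := by
    rw [div_mul_div_comm, one_mul, div_lt_div_iff₀ ha1 (by positivity)]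
    nlinarith [h, ha, hb]
  have heq : (1:ℝ) - Real.exp a / (1 + Real.exp a) = 1 / (1 + Real.exp a) := by
    field_simp
    ring
  rw [heq]
  exact key

/-- If `v` lies in the stated interval then category `k` is at least as likely
as category `k+1` and strictly more likely than category `k-1`. -/
theorem stmt_6 (c : ℕ → ℝ) (K k : ℕ) (v : ℝ) (P : ℕ → ℝ)
    (hk1 : 1 ≤ k) (hkK : k + 1 < K)
    (hc1 : c (k - 1) < c k) (hc2 : c k < c (k + 1))
    (hP : ∀ j, P j = (∏ q ∈ Finset.range j, (1 - sigmoid (c q - v))) * sigmoid (c j - v))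
    (hv1 : c (k - 1) - Real.log (1 - Real.exp (-(c k - c (k - 1)))) < v)
    (hv2 : v ≤ c k - Real.log (1 - Real.exp (-(c (k + 1) - c k)))) :
    P k ≥ P (k + 1) ∧ P k > P (k - 1) := by
  obtain ⟨m, rfl⟩ : ∃ m, k = m + 1 := ⟨k - 1, (Nat.succ_pred_eq_of_pos hk1).symm⟩
  simp only [Nat.add_sub_cancel] at *
  have hprodpos : ∀ n, 0 < ∏ q ∈ Finset.range n, (1 - sigmoid (c q - v)) := by
    intro n
    exact Finset.prod_pos fun q _ => by linarith [sigmoid_lt_one (c q - v)]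
  constructor
  · -- P (m+1) ≥ P (m+2)
    have hexp : (∏ q ∈ Finset.range (m + 1 + 1), (1 - sigmoid (c q - v)))
        = (∏ q ∈ Finset.range (m + 1), (1 - sigmoid (c q - v))) *
          (1 - sigmoid (c (m + 1) - v)) := Finset.prod_range_succ _ _
    rw [ge_iff_le, hP (m + 1), hP (m + 1 + 1), hexp, mul_assoc]
    apply mul_le_mul_of_nonneg_left _ (le_of_lt (hprodpos (m + 1)))
    apply key_ge
    have hd : (0:ℝ) < 1 - Real.exp (-(c (m + 1 + 1) - c (m + 1))) := by
      have : Real.exp (-(c (m + 1 + 1) - c (m + 1))) < 1 := by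
        rw [Real.exp_lt_one_iff]; linarith
      linarith
    have h2 : 1 - Real.exp (-(c (m + 1 + 1) - c (m + 1))) ≤ Real.exp (c (m + 1) - v) := by
      rw [← Real.log_le_iff_le_exp hd]; linarith
    have heq : Real.exp (-(c (m + 1 + 1) - c (m + 1))) =
        Real.exp (c (m + 1) - v) / Real.exp (c (m + 1 + 1) - v) := by
      rw [← Real.exp_sub]; ring_nf
    rw [heq] at h2
    have hb := Real.exp_pos (c (m + 1 + 1) - v)
    have h3 : 1 - Real.exp (c (m + 1) - v) ≤
        Real.exp (c (m + 1) - v) / Real.exp (c (m + 1 + 1) - v) := by linarith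
    have h4 := (le_div_iff₀ hb).mp h3
    nlinarith [h4, hb]
  · -- P (m+1) > P m
    rw [hP (m + 1), hP m, Finset.prod_range_succ, mul_assoc]
    apply mul_lt_mul_of_pos_left _ (hprodpos m)
    apply key_gt
    have hd : (0:ℝ) < 1 - Real.exp (-(c (m + 1) - c m)) := by
      have : Real.exp (-(c (m + 1) - c m)) < 1 := by
        rw [Real.exp_lt_one_iff]; linarith
      linarith
    have h2 : Real.exp (c m - v) < 1 - Real.exp (-(c (m + 1) - c m)) := by
      rw [← Real.lt_log_iff_exp_lt hd]; linarith
    have heq : Real.exp (-(c (m + 1) - c m)) =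
        Real.exp (c m - v) / Real.exp (c (m + 1) - v) := by
      rw [← Real.exp_sub]; ring_nf
    rw [heq] at h2
    have hb := Real.exp_pos (c (m + 1) - v)
    have h3 : Real.exp (c m - v) / Real.exp (c (m + 1) - v) <
        1 - Real.exp (c m - v) := by linarith
    have h4 := (div_lt_iff₀ hb).mp h3
    nlinarith [h4, hb]
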